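/- Let G be a graph on {x_1,...,x_n, y_1,...,y_n} (non-isolated) with X = {x_1,...,x_n} a minimal vertex cover, Y a maximal independent set, x_i y_i ∈ E(G) for all i, and minimum vertex cover size n. If (i) for distinct i,j,k and z_i ∈ {x_i,y_i}, z_i x_j ∈ E(G) and y_j x_k ∈ E(G) imply z_i x_k ∈ E(G), and (ii) x_i y_j ∈ E(G) implies x_i x_j ∉ E(G), then G is unmixed. -/

import Mathlib

open SimpleGraph

/-- `C` is a vertex cover of `G`. -/
def IsVC {V : Type*} (G : SimpleGraph V) (C : Set V) : Prop :=
  ∀ ⦃u v : V⦄, G.Adj u v → u ∈ C ∨ v ∈ C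

/-- `C` is a minimal (inclusion-wise) vertex cover of `G`. -/
def IsMinVC {V : Type*} (G : SimpleGraph V) (C : Set V) : Prop :=
  IsVC G C ∧ ∀ C' : Set V, C' ⊆ C → IsVC G C' → C' = C

/-- `A` is an independent set of `G`. -/
def IsIndep {V : Type*} (G : SimpleGraph V) (A : Set V) : Prop :=
  ∀ ⦃u v : V⦄, u ∈ A → v ∈ A → ¬ G.Adj u v

/-- `A` is a maximal independent set of `G`. -/
def IsMaxIndep {V : Type*} (G : SimpleGraph V) (A : Set V) : Prop :=
  IsIndep G A ∧ ∀ A' : Set V, A ⊆ A' → IsIndep G A' → A' = A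

/-- `G` is unmixed: all minimal vertex covers have the same cardinality. -/
def Unmixed {V : Type*} (G : SimpleGraph V) : Prop :=
  ∀ C₁ C₂ : Set V, IsMinVC G C₁ → IsMinVC G C₂ → C₁.ncard = C₂.ncard

/-- Vertex type with the two classes `X = {x_1,…,x_n}` (left) and `Y = {y_1,…,y_n}` (right). -/
abbrev VT (n : ℕ) := Fin n ⊕ Fin n

/-- The vertex `x_i`. -/
def xv {n : ℕ} (i : Fin n) : VT n := Sum.inl i

/-- The vertex `y_i`. -/
def yv {n : ℕ} (i : Fin n) : VT n := Sum.inr i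

/-- The 4-cycle `C_{ij}` (edges `x_iy_i, y_ix_j, x_jy_j, y_jx_i`) is contained in `G`. -/
def HasC2 {n : ℕ} (G : SimpleGraph (VT n)) (i j : Fin n) : Prop :=
  G.Adj (xv i) (yv i) ∧ G.Adj (yv i) (xv j) ∧ G.Adj (xv j) (yv j) ∧ G.Adj (yv j) (xv i)

/-- The `2r`-cycle `C_{i_1…i_r}` given by `f : Fin r → Fin n` is contained in `G`:
edges `x_{f s} y_{f s}` and `y_{f s} x_{f (s+1)}` (cyclically). -/
def IsCycleIn {n r : ℕ} (G : SimpleGraph (VT n)) (f : Fin r → Fin n) : Prop :=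
  ∀ s : Fin r, G.Adj (xv (f s)) (yv (f s)) ∧ G.Adj (yv (f s)) (xv (f (finRotate r s)))

/-- If `G` (in the setup (*)) satisfies conditions (i) and (ii), then `G` is unmixed. -/
theorem conditions_imply_unmixed {n : ℕ} (G : SimpleGraph (VT n))
    (hni : ∀ v : VT n, ∃ u : VT n, G.Adj u v)
    (hX : IsMinVC G (Set.range (xv : Fin n → VT n)))
    (hY : IsMaxIndep G (Set.range (yv : Fin n → VT n)))
    (hm : ∀ i : Fin n, G.Adj (xv i) (yv i))
    (hht : ∀ C : Set (VT n), IsVC G C → n ≤ C.ncard)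
    (h1 : ∀ i j k : Fin n, i ≠ j → j ≠ k → i ≠ k →
        ∀ z ∈ ({xv i, yv i} : Set (VT n)),
          G.Adj z (xv j) → G.Adj (yv j) (xv k) → G.Adj z (xv k))
    (h2 : ∀ i j : Fin n, G.Adj (xv i) (yv j) → ¬ G.Adj (xv i) (xv j)) :
    Unmixed G := by
  have key : ∀ C : Set (VT n), IsMinVC G C → C.ncard = n := by
    intro C hC
    obtain ⟨hcov, hmin⟩ := hC
    -- every vertex of C has a "private" neighbor outside C
    have hpriv : ∀ v ∈ C, ∃ u, G.Adj v u ∧ u ∉ C := by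
      intro v hv
      by_contra h
      push_neg at h
      have hdiff : (C \ {v}) = C := by
        apply hmin _ Set.diff_subset
        intro a b hab
        rcases hcov hab with ha | hb
        · by_cases hav : a = v
          · subst hav
            exact Or.inr ⟨h b hab, by simpa using hab.ne'⟩
          · exact Or.inl ⟨ha, hav⟩
        · by_cases hbv : b = v
          · subst hbv
            exact Or.inl ⟨h a hab.symm, by simpa using hab.ne⟩
          · exact Or.inr ⟨hb, hbv⟩
      have : v ∈ C \ {v} := hdiff.symm ▸ hv
      exact this.2 rfl
    -- not both x_i and y_i are in C
    have hone : ∀ i : Fin n, ¬(xv i ∈ C ∧ yv i ∈ C) := by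
      rintro i ⟨hxC, hyC⟩
      obtain ⟨a, hxa, haC⟩ := hpriv (xv i) hxC
      obtain ⟨b, hyb, hbC⟩ := hpriv (yv i) hyC
      -- b must be some x_j
      obtain ⟨j, rfl⟩ : ∃ j, b = xv j := by
        rcases b with j | j
        · exact ⟨j, rfl⟩
        · exact absurd hyb (hY.1 ⟨i, rfl⟩ ⟨j, rfl⟩)
      have hij : i ≠ j := by
        rintro rfl; exact hbC hxC
      have hyjC : yv j ∈ C := by
        rcases hcov (hm j) with h' | h'
        · exact absurd h' hbC
        · exact h'
      rcases a with k | k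
      · -- a = x_k
        have hki : k ≠ i := by
          rintro rfl; exact hbC (by exact (hxa.ne rfl).elim)
        by_cases hkj : k = j
        · subst hkj
          exact h2 k i hyb.symm hxa.symm
        · have hadj : G.Adj (xv k) (xv j) :=
            h1 k i j hki hij hkj (xv k) (Or.inl rfl) hxa.symm hyb
          rcases hcov hadj with h' | h'
          · exact haC h'
          · exact hbC h'
      · -- a = y_k
        have hki : k ≠ i := by
          rintro rfl; exact haC hyC
        have hkj : k ≠ j := by
          rintro rfl; exact haC hyjC
        have hadj : G.Adj (yv k) (xv j) :=
          h1 k i j hki hij hkj (yv k) (Or.inr rfl) hxa.symm hyb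
        rcases hcov hadj with h' | h'
        · exact haC h'
        · exact hbC h'
    have hatleast : ∀ i : Fin n, xv i ∈ C ∨ yv i ∈ C := fun i => hcov (hm i)
    classical
    set f : Fin n → VT n := fun i => if xv i ∈ C then xv i else yv i with hf
    have hCeq : C = Set.range f := by
      ext v
      constructor
      · intro hv
        rcases v with i | i
        · refine ⟨i, ?_⟩
          simp only [hf, xv, hv, if_true]
        · refine ⟨i, ?_⟩
          have hx : xv i ∉ C := fun hx => hone i ⟨hx, hv⟩
          simp only [hf, if_neg hx, yv]
      · rintro ⟨i, rfl⟩
        by_cases hx : xv i ∈ C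
        · simp only [hf, if_pos hx]; exact hx
        · simp only [hf, if_neg hx]
          rcases hatleast i with h' | h'
          · exact absurd h' hx
          · exact h'
    have hinj : Function.Injective f := by
      intro i j hij
      by_cases hx : xv i ∈ C <;> by_cases hy : xv j ∈ C
      · rw [hf] at hij; simp only [xv, yv] at hij hx hy
        simp only [hx, hy, if_true, if_false] at hij
        exact Sum.inl.inj hij
      · rw [hf] at hij; simp only [xv, yv] at hij hx hy
        simp [hx, hy] at hij
      · rw [hf] at hij; simp only [xv, yv] at hij hx hy
        simp [hx, hy] at hij
      · rw [hf] at hij; simp only [xv, yv] at hij hx hy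
        simp only [hx, hy, if_true, if_false] at hij
        exact Sum.inr.inj hij
    rw [hCeq, ← Set.image_univ, Set.ncard_image_of_injective _ hinj,
      Set.ncard_univ, Nat.card_eq_fintype_card, Fintype.card_fin]
  intro C₁ C₂ h₁ h₂
  rw [key C₁ h₁, key C₂ h₂]
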